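/- Let f be a holomorphic injective function on the open unit disk 𝔻 ⊂ ℂ with f(0) = 0, and let m₁, …, m_n be integers. Then there exists a holomorphic map p : 𝔻 → M_n(ℂ) with p(w) invertible for every w ∈ 𝔻, such that for all w ∈ 𝔻 with w ≠ 0, diag(f(w)^{m₁}, …, f(w)^{m_n}) = diag(w^{m₁}, …, w^{m_n}) · p(w), where for negative exponents m, x^m means (x⁻¹)^{−m} (well-defined since f(w) ≠ 0 for w ≠ 0 by injectivity). -/

import Mathlib

open Matrix

open Metric Filter Complex Real in
/-- An injective holomorphic function on the unit disk vanishing at `0`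
has nonvanishing derivative at `0`. -/
lemma stmt14_deriv_ne_zero (f : ℂ → ℂ)
    (hf : DifferentiableOn ℂ f (Metric.ball 0 1))
    (hinj : Set.InjOn f (Metric.ball 0 1))
    (hf0 : f 0 = 0) : deriv f 0 ≠ 0 := by
  have hopen : IsOpen (Metric.ball (0 : ℂ) 1) := Metric.isOpen_ball
  have h0mem : (0 : ℂ) ∈ Metric.ball (0 : ℂ) 1 := by simp
  have ha : AnalyticAt ℂ f 0 := hf.analyticAt (hopen.mem_nhds h0mem)
  -- f is not eventually zero near 0, by injectivity
  have hnz : ¬ (∀ᶠ z in nhds (0 : ℂ), f z = 0) := by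
    intro h
    obtain ⟨r, hr, hb⟩ := Metric.eventually_nhds_iff_ball.mp h
    set r' : ℝ := min r 1 with hr'def
    have hr' : 0 < r' := lt_min hr one_pos
    have hmem : ∀ x : ℝ, 0 ≤ x → x < r' → ((x : ℂ) ∈ ball (0 : ℂ) r ∧ (x : ℂ) ∈ ball (0 : ℂ) 1) := by
      intro x hx0 hx
      constructor <;>
      · rw [mem_ball, Complex.dist_eq, sub_zero, Complex.norm_real, Real.norm_eq_abs, _root_.abs_of_nonneg hx0]
        exact lt_of_lt_of_le hx (by simp [hr'def])
    have h1 := hmem (r' / 2) (by positivity) (by linarith)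
    have h2 := hmem (r' / 3) (by positivity) (by linarith)
    have : ((r' / 2 : ℝ) : ℂ) = ((r' / 3 : ℝ) : ℂ) :=
      hinj h1.2 h2.2 (by rw [hb _ h1.1, hb _ h2.1])
    have : (r' / 2 : ℝ) = r' / 3 := by exact_mod_cast this
    linarith
  -- order of f at 0 is a finite natural number k
  have htop : analyticOrderAt f 0 ≠ ⊤ := fun h => hnz (analyticOrderAt_eq_top.mp h)
  lift analyticOrderAt f 0 to ℕ using htop with k hk
  obtain ⟨h, hh, hh0, hE⟩ := (ha.analyticOrderAt_eq_natCast (n := k)).mp hk.symm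
  simp only [sub_zero, smul_eq_mul] at hE
  -- k ≠ 0 since f 0 = 0
  have hk0 : k ≠ 0 := by
    rintro rfl
    apply hh0
    have := hE.self_of_nhds
    simpa [hf0] using this.symm
  -- k < 2 : otherwise contradiction with injectivity
  have hk2 : k < 2 := by
    by_contra hge
    push_neg at hge
    -- Normalized unit H with H 0 = 1
    set H : ℂ → ℂ := fun w => h w / h 0 with hHdef
    have hH0 : H 0 = 1 := div_self hh0
    have hHdiff : DifferentiableAt ℂ H 0 := hh.differentiableAt.div_const _
    have hHslit : ∀ᶠ w in nhds (0 : ℂ), H w ∈ Complex.slitPlane :=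
      hHdiff.continuousAt.eventually_mem
        (Complex.isOpen_slitPlane.mem_nhds (by rw [hH0]; exact Complex.one_mem_slitPlane))
    have hkC : (k : ℂ) ≠ 0 := Nat.cast_ne_zero.mpr hk0
    -- k-th root construction
    set c : ℂ := Complex.exp (Complex.log (h 0) / k) with hcdef
    have hc0 : c ≠ 0 := Complex.exp_ne_zero _
    have hargk : ∀ x : ℂ, (k : ℂ) * (x / k) = x := fun x => by field_simp
    have hck : c ^ k = h 0 := by
      rw [hcdef, ← Complex.exp_nat_mul, hargk, Complex.exp_log hh0]
    set rr : ℂ → ℂ := fun w => c * Complex.exp (Complex.log (H w) / k) with hrrdef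
    set φ : ℂ → ℂ := fun w => w * rr w with hφdef
    have hrr0 : rr 0 = c := by
      simp [hrrdef, hH0, Complex.log_one]
    have hφ0 : φ 0 = 0 := by simp [hφdef]
    -- f w = φ w ^ k near 0
    have hEk : ∀ᶠ w in nhds (0 : ℂ), f w = φ w ^ k := by
      filter_upwards [hE, hHslit] with w hfw hsl
      have hHne : H w ≠ 0 := Complex.slitPlane_ne_zero hsl
      have hrk : rr w ^ k = h w := by
        show (c * Complex.exp (Complex.log (H w) / k)) ^ k = h w
        rw [mul_pow, hck, ← Complex.exp_nat_mul, hargk, Complex.exp_log hHne, hHdef]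
        field_simp
      rw [hfw, hφdef]
      simp only [mul_pow, hrk]
    -- φ has invertible strict derivative at 0
    obtain ⟨q, hq⟩ := hh
    have hhs : HasStrictDerivAt h (q 1 fun _ => 1) 0 := hq.hasStrictDerivAt
    have hHs : HasStrictDerivAt H ((q 1 fun _ => 1) / h 0) 0 := hhs.div_const _
    have hlogs : HasStrictDerivAt (fun w => Complex.log (H w))
        ((H 0)⁻¹ * ((q 1 fun _ => 1) / h 0)) 0 :=
      (Complex.hasStrictDerivAt_log (by rw [hH0]; exact Complex.one_mem_slitPlane)).comp 0 hHs
    have hexps : HasStrictDerivAt rr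
        (c * (Complex.exp (Complex.log (H 0) / k) *
          ((H 0)⁻¹ * ((q 1 fun _ => 1) / h 0) / k))) 0 := by
      exact (((Complex.hasStrictDerivAt_exp _).comp 0 (hlogs.div_const k))).const_mul c
    have hφs : HasStrictDerivAt φ
        (1 * rr 0 + 0 * (c * (Complex.exp (Complex.log (H 0) / k) *
          ((H 0)⁻¹ * ((q 1 fun _ => 1) / h 0) / k)))) 0 :=
      (hasStrictDerivAt_id 0).mul hexps
    have hd0 : (1 * rr 0 + 0 * (c * (Complex.exp (Complex.log (H 0) / k) *
          ((H 0)⁻¹ * ((q 1 fun _ => 1) / h 0) / k)))) ≠ 0 := by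
      simp [hrr0, hc0]
    -- open mapping near 0 via the inverse function theorem
    have hmap : Filter.map φ (nhds 0) = nhds (0 : ℂ) := by
      have := hφs.map_nhds_eq hd0
      rwa [hφ0] at this
    have hs : {w : ℂ | f w = φ w ^ k} ∩ ball 0 1 ∈ nhds (0 : ℂ) :=
      Filter.inter_mem hEk (hopen.mem_nhds h0mem)
    have himg : φ '' ({w : ℂ | f w = φ w ^ k} ∩ ball 0 1) ∈ nhds (0 : ℂ) := by
      rw [← hmap]
      exact Filter.image_mem_map hs
    obtain ⟨δ, hδ, hbδ⟩ := Metric.mem_nhds_iff.mp himg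
    set ε : ℝ := δ / 2 with hεdef
    have hε : 0 < ε := by positivity
    have hεδ : ε < δ := by rw [hεdef]; linarith
    -- the k-th root of unity
    set θ : ℝ := 2 * π / k with hθdef
    set ζ : ℂ := Complex.exp (θ * Complex.I) with hζdef
    have habsζ : ‖ζ‖ = 1 := Complex.norm_exp_ofReal_mul_I θ
    have hζk : ζ ^ k = 1 := by
      rw [hζdef, ← Complex.exp_nat_mul]
      have : (k : ℂ) * (↑θ * Complex.I) = 2 * ↑π * Complex.I := by
        rw [hθdef]
        have hkR : (k : ℝ) ≠ 0 := Nat.cast_ne_zero.mpr hk0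
        push_cast
        field_simp
      rw [this, Complex.exp_two_pi_mul_I]
    have hζ1 : ζ ≠ 1 := by
      rw [hζdef]
      intro hexp
      obtain ⟨j, hj⟩ := Complex.exp_eq_one_iff.mp hexp
      have hI : (θ : ℂ) = j * (2 * π) := by
        have := hj
        rw [show (j : ℂ) * (2 * ↑π * Complex.I) = ((j : ℂ) * (2 * ↑π)) * Complex.I by ring] at this
        exact mul_right_cancel₀ Complex.I_ne_zero this
      have hR : θ = (j : ℝ) * (2 * π) := by exact_mod_cast hI
      have hθpos : 0 < θ := by
        rw [hθdef]
        apply div_pos (by positivity)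
        exact_mod_cast Nat.pos_of_ne_zero hk0
      have hθlt : θ < 2 * π := by
        rw [hθdef]
        have hk2R : (2 : ℝ) ≤ (k : ℝ) := by exact_mod_cast hge
        calc 2 * π / (k : ℝ) ≤ 2 * π / 2 := by
              apply div_le_div_of_nonneg_left (by positivity) (by norm_num) hk2R
          _ < 2 * π := by
              rw [div_lt_iff₀ (by norm_num)]
              nlinarith [Real.pi_pos]
      rcases le_or_gt j 0 with hj0 | hj0
      · have : (j : ℝ) * (2 * π) ≤ 0 := by
          apply mul_nonpos_of_nonpos_of_nonneg
          · exact_mod_cast hj0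
          · positivity
        linarith
      · have hj1 : (1 : ℝ) ≤ (j : ℝ) := by exact_mod_cast hj0
        have : 2 * π ≤ (j : ℝ) * (2 * π) := by nlinarith [Real.pi_pos]
        linarith
    -- two distinct points with equal f-values
    have hmem1 : (ε : ℂ) ∈ ball (0 : ℂ) δ := by
      rw [mem_ball, Complex.dist_eq, sub_zero, Complex.norm_real, Real.norm_eq_abs, abs_of_pos hε]
      exact hεδ
    have hmem2 : (ε : ℂ) * ζ ∈ ball (0 : ℂ) δ := by
      rw [mem_ball, Complex.dist_eq, sub_zero, norm_mul, habsζ, mul_one,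
        Complex.norm_real, Real.norm_eq_abs, abs_of_pos hε]
      exact hεδ
    obtain ⟨w₁, hw₁s, hw₁⟩ := hbδ hmem1
    obtain ⟨w₂, hw₂s, hw₂⟩ := hbδ hmem2
    have hfw₁ : f w₁ = (ε : ℂ) ^ k := by rw [hw₁s.1, hw₁]
    have hfw₂ : f w₂ = (ε : ℂ) ^ k := by rw [hw₂s.1, hw₂, mul_pow, hζk, mul_one]
    have hww : w₁ = w₂ := hinj hw₁s.2 hw₂s.2 (by rw [hfw₁, hfw₂])
    have : (ε : ℂ) = (ε : ℂ) * ζ := by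
      calc (ε : ℂ) = φ w₁ := hw₁.symm
        _ = φ w₂ := by rw [hww]
        _ = (ε : ℂ) * ζ := hw₂
    have hεC : (ε : ℂ) ≠ 0 := by exact_mod_cast hε.ne'
    apply hζ1
    field_simp at this
    tauto
  -- hence k = 1 and deriv f 0 = h 0 ≠ 0
  interval_cases k
  · exact absurd rfl hk0
  · have hderiv : deriv f 0 = h 0 := by
      have h1 : deriv f 0 = deriv (fun z => z ^ 1 * h z) 0 := Filter.EventuallyEq.deriv_eq hE
      have h2 : HasDerivAt (fun z : ℂ => z ^ 1 * h z) (1 * h 0 + 0 * deriv h 0) 0 := by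
        simpa [pow_one] using (hasDerivAt_id' (0 : ℂ)).fun_mul hh.differentiableAt.hasDerivAt
      rw [h1, h2.deriv]
      ring
    rw [hderiv]
    exact hh0

/-- Coordinate-independence of loop-group strata: for a holomorphic injective `f` on the
unit disk with `f 0 = 0` and integers `m₁, …, m_n`, there is a holomorphic family
`p : 𝔻 → Mₙ(ℂ)` of invertible matrices with
`diag(f(w)^{mᵢ}) = diag(w^{mᵢ}) · p(w)` for `w ≠ 0` in the disk. -/
theorem stmt14 (n : ℕ) (f : ℂ → ℂ)
    (hf : DifferentiableOn ℂ f (Metric.ball 0 1))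
    (hinj : Set.InjOn f (Metric.ball 0 1))
    (hf0 : f 0 = 0) (m : Fin n → ℤ) :
    ∃ p : ℂ → Matrix (Fin n) (Fin n) ℂ,
      (∀ i j : Fin n, DifferentiableOn ℂ (fun w => p w i j) (Metric.ball 0 1)) ∧
      (∀ w ∈ Metric.ball (0 : ℂ) 1, IsUnit (p w)) ∧
      (∀ w ∈ Metric.ball (0 : ℂ) 1, w ≠ 0 →
        Matrix.diagonal (fun i => f w ^ m i)
          = Matrix.diagonal (fun i => w ^ m i) * p w) := by
  have hopen : IsOpen (Metric.ball (0 : ℂ) 1) := Metric.isOpen_ball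
  have h0mem : (0 : ℂ) ∈ Metric.ball (0 : ℂ) 1 := by simp
  set g : ℂ → ℂ := dslope f 0 with hgdef
  have hgd : DifferentiableOn ℂ g (Metric.ball 0 1) :=
    (Complex.differentiableOn_dslope (hopen.mem_nhds h0mem)).mpr hf
  -- f w = w * g w everywhere
  have hfg : ∀ w : ℂ, f w = w * g w := by
    intro w
    have := sub_smul_dslope f 0 w
    simp only [sub_zero, smul_eq_mul, hf0, sub_zero] at this
    rw [hgdef, this]
  -- g never vanishes on the ball
  have hg0 : g 0 ≠ 0 := by
    rw [hgdef, dslope_same]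
    exact stmt14_deriv_ne_zero f hf hinj hf0
  have hgne : ∀ w ∈ Metric.ball (0 : ℂ) 1, g w ≠ 0 := by
    intro w hw
    rcases eq_or_ne w 0 with rfl | hw0
    · exact hg0
    · have hfw : f w ≠ 0 := by
        intro hzero
        exact hw0 (hinj hw h0mem (by rw [hzero, hf0]))
      intro hgz
      apply hfw
      rw [hfg w, hgz, mul_zero]
  refine ⟨fun w => Matrix.diagonal (fun i => g w ^ m i), ?_, ?_, ?_⟩
  · intro i j
    rcases eq_or_ne i j with rfl | hij
    · have : (fun w => Matrix.diagonal (fun i' => g w ^ m i') i i) = fun w => g w ^ m i := by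
        funext w
        simp [Matrix.diagonal_apply_eq]
      rw [this]
      intro w hw
      exact (hgd w hw).zpow (Or.inl (hgne w hw))
    · have : (fun w => Matrix.diagonal (fun i' => g w ^ m i') i j) = fun _ => (0 : ℂ) := by
        funext w
        simp [Matrix.diagonal_apply_ne _ hij]
      rw [this]
      exact differentiableOn_const 0
  · intro w hw
    rw [Matrix.isUnit_diagonal]
    refine IsUnit.of_mul_eq_one (fun i => g w ^ (-(m i))) ?_
    funext i
    simp only [Pi.mul_apply, Pi.one_apply]
    rw [← zpow_add₀ (hgne w hw)]
    simp
  · intro w hw hw0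
    rw [Matrix.diagonal_mul_diagonal]
    refine congrArg Matrix.diagonal (funext fun i => ?_)
    show f w ^ m i = w ^ m i * g w ^ m i
    rw [hfg w, mul_zpow]
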